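/- arXiv:2301.05692 — 4 statements merged into one kernel-verified Lean document; each statement's English description precedes it below -/
import Mathlib

section
/- Let A, B, D be unital C*-algebras, let π_A : A → D and π_B : B → D be unital *-homomorphisms, let C ≥ 1, let ε > 0, and let L_A and L_B be [0,∞]-valued seminorms on the self-adjoint parts of A and B respectively, each of which is C-strongly Leibniz. Define, for every self-adjoint (a,b) in the direct sum C*-algebra A ⊕ B, T(a,b) = max{ L_A(a), L_B(b), (1/ε)·‖π_A(a) − π_B(b)‖_D }. Then T is C-strongly Leibniz on A ⊕ B: for every self-adjoint invertible element (a,b) of A ⊕ B, T((a,b)⁻¹) ≤ C · ‖(a,b)⁻¹‖_{A⊕B}² · T(a,b). -/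
open scoped ENNReal

/-- A `[0,∞]`-valued seminorm `L` on the self-adjoint part of a unital C*-algebra `A` is
`C`-strongly Leibniz if for every self-adjoint invertible `a ∈ A` one has
`L(a⁻¹) ≤ C‖a⁻¹‖² L(a)`. -/
def StronglyLeibniz {A : Type*} [Ring A] [Norm A] [Star A] (C : ℝ) (L : A → ℝ≥0∞) : Prop :=
  ∀ a : A, IsSelfAdjoint a → IsUnit a →
    L (Ring.inverse a) ≤ ENNReal.ofReal (C * ‖Ring.inverse a‖ ^ 2) * L a

/-- if `L_A` and `L_B` are `C`-strongly Leibniz seminorms on the self-adjoint parts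
of unital C*-algebras `A` and `B`, `π_A : A → D`, `π_B : B → D` are unital *-homomorphisms and
`ε > 0`, then `T(a,b) = max { L_A a, L_B b, ε⁻¹ ‖π_A a - π_B b‖ }` is `C`-strongly Leibniz on
the direct sum `A ⊕ B` (with its maximum norm). -/
theorem stmt0 {A B D : Type*} [CStarAlgebra A] [CStarAlgebra B] [CStarAlgebra D]
    (πA : A →⋆ₐ[ℂ] D) (πB : B →⋆ₐ[ℂ] D)
    (C : ℝ) (hC : 1 ≤ C) (ε : ℝ) (hε : 0 < ε)
    (LA : A → ℝ≥0∞) (LB : B → ℝ≥0∞)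
    (hLA : StronglyLeibniz C LA) (hLB : StronglyLeibniz C LB)
    (T : A × B → ℝ≥0∞)
    (hT : ∀ p : A × B,
      T p = max (max (LA p.1) (LB p.2)) (ENNReal.ofReal (ε⁻¹ * ‖πA p.1 - πB p.2‖))) :
    StronglyLeibniz C T := by
  intro p hp hu
  obtain ⟨u, hup⟩ := hu
  have hu1 : IsUnit p.1 := ⟨Units.map (MonoidHom.fst A B) u, by simp [hup]⟩
  have hu2 : IsUnit p.2 := ⟨Units.map (MonoidHom.snd A B) u, by simp [hup]⟩
  set a' := Ring.inverse p.1 with ha'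
  set b' := Ring.inverse p.2 with hb'
  have hinv : Ring.inverse p = (a', b') := by
    rw [← hup, Ring.inverse_unit u]
    refine Prod.ext ?_ ?_
    · have : p.1 = ↑(Units.map (MonoidHom.fst A B) u) := by simp [hup]
      rw [ha', this, Ring.inverse_unit, ← map_inv]
      simp [hup]
    · have : p.2 = ↑(Units.map (MonoidHom.snd A B) u) := by simp [hup]
      rw [hb', this, Ring.inverse_unit, ← map_inv]
      simp [hup]
  have hp1 : IsSelfAdjoint p.1 := congrArg Prod.fst hp
  have hp2 : IsSelfAdjoint p.2 := congrArg Prod.snd hp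
  have key : πA a' - πB b' = πA a' * (πB p.2 - πA p.1) * πB b' := by
    rw [mul_sub, sub_mul, mul_assoc, ← map_mul πB, Ring.mul_inverse_cancel _ hu2, map_one,
      mul_one, ← map_mul πA, Ring.inverse_mul_cancel _ hu1, map_one, one_mul]
  have hπa : ‖πA a'‖ ≤ ‖a'‖ := NonUnitalStarAlgHom.norm_apply_le πA a'
  have hπb : ‖πB b'‖ ≤ ‖b'‖ := NonUnitalStarAlgHom.norm_apply_le πB b'
  have hnorm : ‖πA a' - πB b'‖ ≤ ‖a'‖ * ‖b'‖ * ‖πA p.1 - πB p.2‖ := by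
    rw [key]
    calc ‖πA a' * (πB p.2 - πA p.1) * πB b'‖
        ≤ ‖πA a'‖ * ‖πB p.2 - πA p.1‖ * ‖πB b'‖ := by
          refine (norm_mul_le _ _).trans ?_
          gcongr
          exact norm_mul_le _ _
      _ = ‖πA a'‖ * ‖πB b'‖ * ‖πA p.1 - πB p.2‖ := by rw [norm_sub_rev]; ring
      _ ≤ ‖a'‖ * ‖b'‖ * ‖πA p.1 - πB p.2‖ := by gcongr
  set M := ‖Ring.inverse p‖ with hM
  have hMdef : M = max ‖a'‖ ‖b'‖ := by rw [hM, hinv, Prod.norm_def]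
  have hMa : ‖a'‖ ≤ M := hMdef ▸ le_max_left _ _
  have hMb : ‖b'‖ ≤ M := hMdef ▸ le_max_right _ _
  have hM0 : 0 ≤ M := norm_nonneg _
  have hCM0 : 0 ≤ C * M ^ 2 := by positivity
  rw [hT, hT, hinv]
  refine max_le (max_le ?_ ?_) ?_
  · calc LA a' ≤ ENNReal.ofReal (C * ‖a'‖ ^ 2) * LA p.1 := hLA p.1 hp1 hu1
      _ ≤ ENNReal.ofReal (C * M ^ 2) * max (max (LA p.1) (LB p.2))
            (ENNReal.ofReal (ε⁻¹ * ‖πA p.1 - πB p.2‖)) := by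
          refine mul_le_mul' (ENNReal.ofReal_le_ofReal ?_)
            (le_trans (le_max_left _ _) (le_max_left _ _))
          have hC0 : 0 ≤ C := by linarith
          gcongr
  · calc LB b' ≤ ENNReal.ofReal (C * ‖b'‖ ^ 2) * LB p.2 := hLB p.2 hp2 hu2
      _ ≤ ENNReal.ofReal (C * M ^ 2) * max (max (LA p.1) (LB p.2))
            (ENNReal.ofReal (ε⁻¹ * ‖πA p.1 - πB p.2‖)) := by
          refine mul_le_mul' (ENNReal.ofReal_le_ofReal ?_)
            (le_trans (le_max_right _ _) (le_max_left _ _))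
          have hC0 : 0 ≤ C := by linarith
          gcongr
  · have hreal : ε⁻¹ * ‖πA a' - πB b'‖ ≤ (C * M ^ 2) * (ε⁻¹ * ‖πA p.1 - πB p.2‖) := by
      have hε' : 0 ≤ ε⁻¹ := by positivity
      have h2 : ‖a'‖ * ‖b'‖ ≤ C * M ^ 2 := by nlinarith [norm_nonneg a', norm_nonneg b']
      have h3 : ε⁻¹ * ‖πA a' - πB b'‖ ≤ ε⁻¹ * (‖a'‖ * ‖b'‖ * ‖πA p.1 - πB p.2‖) := by
        gcongr
      refine h3.trans ?_
      nlinarith [norm_nonneg (πA p.1 - πB p.2), norm_nonneg a', norm_nonneg b',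
        mul_le_mul_of_nonneg_right h2 (norm_nonneg (πA p.1 - πB p.2))]
    calc ENNReal.ofReal (ε⁻¹ * ‖πA a' - πB b'‖)
        ≤ ENNReal.ofReal ((C * M ^ 2) * (ε⁻¹ * ‖πA p.1 - πB p.2‖)) :=
          ENNReal.ofReal_le_ofReal hreal
      _ = ENNReal.ofReal (C * M ^ 2) * ENNReal.ofReal (ε⁻¹ * ‖πA p.1 - πB p.2‖) :=
          ENNReal.ofReal_mul hCM0
      _ ≤ _ := mul_le_mul' le_rfl (le_max_right _ _)
end

section
/- Let C ≥ 1, let (D_n)_{n∈ℕ} be a sequence of unital C*-algebras, and for each n let T_n be a [0,∞]-valued seminorm on the self-adjoint part of D_n which is C-strongly Leibniz and satisfies T_n(1_{D_n}) = 0. Let S be the C*-algebra of bounded sequences (d_n) with d_n ∈ D_n, let I be the ideal of null sequences, let F = S/I with quotient map q : S → F, and for self-adjoint a ∈ F define Q(a) = inf{ sup_{n∈ℕ} T_n(d_n) : (d_n) ∈ S, each d_n self-adjoint, q((d_n)) = a } ∈ [0,∞]. Then Q is C-strongly Leibniz: for every self-adjoint invertible a ∈ F, Q(a⁻¹) ≤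 C · ‖a⁻¹‖_F² · Q(a). -/
open scoped ENNReal

noncomputable section

variable (D : ℕ → Type*) [∀ n, CStarAlgebra (D n)] [∀ n, Nontrivial (D n)]

/-- A `[0,∞]`-valued seminorm `L` on the self-adjoint part of a unital C*-algebra (or any unital
normed star ring) `A`, with norm function `NA`, is `C`-strongly Leibniz if for every self-adjoint
invertible `a ∈ A` one has `L(a⁻¹) ≤ C‖a⁻¹‖² L(a)`. -/
def StronglyLeibnizWith {A : Type*} [Ring A] [Star A] (NA : A → ℝ) (C : ℝ)
    (L : A → ℝ≥0∞) : Prop :=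
  ∀ a : A, IsSelfAdjoint a → IsUnit a →
    L (Ring.inverse a) ≤ ENNReal.ofReal (C * NA (Ring.inverse a) ^ 2) * L a

/-- The ring congruence on the C*-algebra `S = lp D ∞` of bounded sequences identifying two
sequences when their difference is a null sequence; its quotient is the quotient of `S` by the
closed two-sided ideal `I` of null sequences. -/
def nullRingCon : RingCon (lp D ∞) where
  r a b := Filter.Tendsto (fun n => ‖(a - b : lp D ∞) n‖) Filter.atTop (nhds 0)
  iseqv := by
    constructor
    · intro x; simpa using tendsto_const_nhds
    · intro x y h
      refine h.congr fun n => ?_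
      have : ((y - x : lp D ∞) : ∀ n, D n) n = -(((x - y : lp D ∞) : ∀ n, D n) n) := by
        simp
      rw [this, norm_neg]
    · intro x y z hxy hyz
      have h := hxy.add hyz
      rw [add_zero] at h
      refine squeeze_zero (fun n => norm_nonneg _) (fun n => ?_) h
      have : ((x - z : lp D ∞) : ∀ n, D n) n
          = ((x - y : lp D ∞) : ∀ n, D n) n + ((y - z : lp D ∞) : ∀ n, D n) n := by
        simp
      rw [this]
      exact norm_add_le _ _
  add' := by
    intro a b c d hab hcd
    have h := hab.add hcd
    rw [add_zero] at h
    refine squeeze_zero (fun n => norm_nonneg _) (fun n => ?_) h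
    have : ((a + c - (b + d) : lp D ∞) : ∀ n, D n) n
        = ((a - b : lp D ∞) : ∀ n, D n) n + ((c - d : lp D ∞) : ∀ n, D n) n := by
      simp; abel
    rw [this]
    exact norm_add_le _ _
  mul' := by
    intro a b c d hab hcd
    have h : Filter.Tendsto
        (fun n => ‖(a - b : lp D ∞) n‖ * ‖c‖ + ‖b‖ * ‖(c - d : lp D ∞) n‖)
        Filter.atTop (nhds 0) := by
      simpa using (hab.mul_const ‖c‖).add ((hcd.const_mul ‖b‖))
    refine squeeze_zero (fun n => norm_nonneg _) (fun n => ?_) h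
    have key : ((a * c - b * d : lp D ∞) : ∀ n, D n) n
        = ((a - b : lp D ∞) : ∀ n, D n) n * (c : ∀ n, D n) n
          + (b : ∀ n, D n) n * ((c - d : lp D ∞) : ∀ n, D n) n := by
      simp [sub_mul, mul_sub]
      rfl
    rw [key]
    refine (norm_add_le _ _).trans (add_le_add ?_ ?_)
    · exact (norm_mul_le _ _).trans <|
        mul_le_mul_of_nonneg_left (lp.norm_apply_le_norm (by norm_num) c n) (norm_nonneg _)
    · exact (norm_mul_le _ _).trans <|
        mul_le_mul_of_nonneg_right (lp.norm_apply_le_norm (by norm_num) b n) (norm_nonneg _)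

/-- The quotient C*-algebra `F = S/I` of the bounded sequences by the null sequences. -/
def NullQuotient := (nullRingCon D).Quotient

instance : Ring (NullQuotient D) :=
  inferInstanceAs (Ring (nullRingCon D).Quotient)

/-- The canonical surjection `q : S → F`. -/
def nullQuotientMk (d : lp D ∞) : NullQuotient D := (d : (nullRingCon D).Quotient)

/-- The star operation on the quotient `F = S/I`, induced by the coordinatewise star on `S`. -/
instance : Star (NullQuotient D) where
  star := Quotient.map' star <| by
    intro a b hab
    change Filter.Tendsto _ _ _ at hab ⊢
    refine hab.congr fun n => ?_
    have : ((star a - star b : lp D ∞) : ∀ n, D n) n = star (((a - b : lp D ∞) : ∀ n, D n) n) := by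
      rw [← star_sub]
      exact (lp.star_apply _ n)
    rw [this, norm_star]

/-- The quotient C*-norm on `F = S/I`: the infimum of the norms of representatives. -/
def nullQuotientNorm (x : NullQuotient D) : ℝ :=
  sInf {r : ℝ | ∃ d : lp D ∞, nullQuotientMk D d = x ∧ r = ‖d‖}

private theorem aux_isUnit {M : Type*} [Monoid M] {a b : M} (h1 : IsUnit (a * b))
    (h2 : IsUnit (b * a)) : IsUnit a := by
  obtain ⟨u, hu⟩ := h1
  obtain ⟨v, hv⟩ := h2
  have h4 : (↑v : M) * (b * ↑u⁻¹) = b := by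
    rw [hv, mul_assoc, ← mul_assoc a b, ← hu, Units.mul_inv, mul_one]
  refine ⟨⟨a, b * ↑u⁻¹, by rw [← mul_assoc, ← hu, Units.mul_inv], ?_⟩, rfl⟩
  have e : (b * ↑u⁻¹ : M) = ↑v⁻¹ * b := by
    calc (b * ↑u⁻¹ : M) = ↑v⁻¹ * (↑v * (b * ↑u⁻¹)) := by
          rw [← mul_assoc, Units.inv_mul, one_mul]
      _ = ↑v⁻¹ * b := by rw [h4]
  rw [e, mul_assoc, ← hv, Units.inv_mul]

set_option maxHeartbeats 1000000 in
/-- let each `T n` be a `C`-strongly Leibniz `[0,∞]`-valued seminorm on the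
self-adjoint part of the unital C*-algebra `D n` with `T n 1 = 0`.  On the quotient `F = S/I`
of the C*-algebra `S = lp D ∞` of bounded sequences by the ideal of null sequences, define
`Q(a) = inf { sup_n T n (d n) : (d n) ∈ S, each d n self-adjoint, q((d n)) = a }`.
Then `Q` is `C`-strongly Leibniz: for every self-adjoint invertible `a ∈ F`,
`Q(a⁻¹) ≤ C ‖a⁻¹‖_F² Q(a)`. -/
theorem stmt2 (C : ℝ) (hC : 1 ≤ C) (T : ∀ n, D n → ℝ≥0∞)
    (hT : ∀ n, StronglyLeibnizWith (fun x => ‖x‖) C (T n))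
    (hT1 : ∀ n, T n 1 = 0)
    (Q : NullQuotient D → ℝ≥0∞)
    (hQ : ∀ a : NullQuotient D,
      Q a = ⨅ (d : {d : lp D ∞ // (∀ n, IsSelfAdjoint (d n)) ∧ nullQuotientMk D d = a}),
        ⨆ n, T n ((d : lp D ∞) n)) :
    StronglyLeibnizWith (nullQuotientNorm D) C Q := by
  intro a ha hu
  classical
  set N := nullQuotientNorm D (Ring.inverse a) with hN
  obtain ⟨c₀, hc₀⟩ : ∃ c : lp D ∞, nullQuotientMk D c = Ring.inverse a := Quotient.exists_rep _
  obtain ⟨d₀, hd₀⟩ : ∃ d : lp D ∞, nullQuotientMk D d = a := Quotient.exists_rep _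
  -- Every representative `c` of `a⁻¹` satisfies `1 ≤ ‖c‖ * ‖d₀‖`.
  have key : ∀ c : lp D ∞, nullQuotientMk D c = Ring.inverse a → 1 ≤ ‖c‖ * ‖d₀‖ := by
    intro c hc
    have hq : nullQuotientMk D (c * d₀) = nullQuotientMk D 1 := by
      rw [show nullQuotientMk D (c * d₀) = nullQuotientMk D c * nullQuotientMk D d₀ from
        RingCon.coe_mul _ _ _, hc, hd₀, show nullQuotientMk D 1 = 1 from rfl]
      exact Ring.inverse_mul_cancel a hu
    have hnull : Filter.Tendsto (fun n => ‖(c * d₀ - 1 : lp D ∞) n‖) Filter.atTop (nhds 0) :=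
      (RingCon.eq (nullRingCon D)).mp hq
    have hbd : ∀ n, (1 : ℝ) ≤ ‖(c * d₀ - 1 : lp D ∞) n‖ + ‖c‖ * ‖d₀‖ := by
      intro n
      have h1 : ((c * d₀ - 1 : lp D ∞) : ∀ n, D n) n = c n * d₀ n - 1 := by
        simp [lp.infty_coeFn_mul]
        rfl
      have h2 : ‖c n * d₀ n‖ ≤ ‖c‖ * ‖d₀‖ :=
        (norm_mul_le _ _).trans (mul_le_mul (lp.norm_apply_le_norm (by norm_num) c n)
          (lp.norm_apply_le_norm (by norm_num) d₀ n) (norm_nonneg _) (norm_nonneg _))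
      have h3 : ‖(1 : D n)‖ ≤ ‖(1 : D n) - c n * d₀ n‖ + ‖c n * d₀ n‖ := by
        have := norm_add_le ((1 : D n) - c n * d₀ n) (c n * d₀ n)
        rwa [sub_add_cancel] at this
      rw [h1, norm_sub_rev]
      calc (1 : ℝ) = ‖(1 : D n)‖ := norm_one.symm
        _ ≤ ‖(1 : D n) - c n * d₀ n‖ + ‖c n * d₀ n‖ := h3
        _ ≤ ‖(1 : D n) - c n * d₀ n‖ + ‖c‖ * ‖d₀‖ := by linarith
    have hlim := ge_of_tendsto (hnull.add_const (‖c‖ * ‖d₀‖))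
      (Filter.Eventually.of_forall hbd)
    rw [zero_add] at hlim
    exact hlim
  have hd₀pos : 0 < ‖d₀‖ := by
    by_contra h
    push_neg at h
    have h0 : ‖d₀‖ = 0 := le_antisymm h (norm_nonneg _)
    have := key c₀ hc₀
    rw [h0, mul_zero] at this
    linarith
  have hNpos : 0 < N := by
    have hlb : ‖d₀‖⁻¹ ≤ N := by
      refine le_csInf ⟨‖c₀‖, c₀, hc₀, rfl⟩ ?_
      rintro r ⟨c, hc, rfl⟩
      rw [inv_eq_one_div]
      exact (div_le_iff₀ hd₀pos).mpr (key c hc)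
    exact lt_of_lt_of_le (inv_pos.mpr hd₀pos) hlb
  -- Main estimate: for every `ε > 0`.
  have main : ∀ ε : ℝ, 0 < ε → Q (Ring.inverse a) ≤ ENNReal.ofReal (C * (N + ε) ^ 2) * Q a := by
    intro ε hε
    have hCpos : 0 < C * (N + ε) ^ 2 := by nlinarith
    rw [hQ a, ENNReal.mul_iInf_of_ne (ENNReal.ofReal_pos.mpr hCpos).ne' ENNReal.ofReal_ne_top]
    refine le_iInf ?_
    rintro ⟨d, hdsa, hdq⟩
    -- choose a near-optimal representative of the inverse
    obtain ⟨r, hrmem, hr⟩ := Real.lt_sInf_add_pos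
      (s := {r : ℝ | ∃ c : lp D ∞, nullQuotientMk D c = Ring.inverse a ∧ r = ‖c‖})
      ⟨‖c₀‖, c₀, hc₀, rfl⟩ (half_pos hε)
    obtain ⟨c, hc, rfl⟩ := hrmem
    have hcnorm : ‖c‖ < N + ε / 2 := hr
    have hq1 : nullQuotientMk D (d * c) = nullQuotientMk D 1 := by
      rw [show nullQuotientMk D (d * c) = nullQuotientMk D d * nullQuotientMk D c from
        RingCon.coe_mul _ _ _, hc, hdq, show nullQuotientMk D 1 = 1 from rfl]
      exact Ring.mul_inverse_cancel a hu
    have hq2 : nullQuotientMk D (c * d) = nullQuotientMk D 1 := by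
      rw [show nullQuotientMk D (c * d) = nullQuotientMk D c * nullQuotientMk D d from
        RingCon.coe_mul _ _ _, hc, hdq, show nullQuotientMk D 1 = 1 from rfl]
      exact Ring.inverse_mul_cancel a hu
    have hn1 : Filter.Tendsto (fun n => ‖(d * c - 1 : lp D ∞) n‖) Filter.atTop (nhds 0) :=
      (RingCon.eq (nullRingCon D)).mp hq1
    have hn2 : Filter.Tendsto (fun n => ‖(c * d - 1 : lp D ∞) n‖) Filter.atTop (nhds 0) :=
      (RingCon.eq (nullRingCon D)).mp hq2
    have hev : ∀ᶠ n in Filter.atTop, IsUnit (d n) ∧ ‖Ring.inverse (d n)‖ ≤ N + ε := by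
      have e1 : ∀ᶠ n in Filter.atTop, ‖(d * c - 1 : lp D ∞) n‖ < 1 / 2 :=
        hn1.eventually (gt_mem_nhds (by norm_num))
      have e2 : ∀ᶠ n in Filter.atTop, ‖(c * d - 1 : lp D ∞) n‖ < 1 / 2 :=
        hn2.eventually (gt_mem_nhds (by norm_num))
      have e3 : ∀ᶠ n in Filter.atTop, (2 * ‖c‖ + 1) * ‖(d * c - 1 : lp D ∞) n‖ < ε / 2 := by
        have h := hn1.const_mul (2 * ‖c‖ + 1)
        rw [mul_zero] at h
        exact h.eventually (gt_mem_nhds (half_pos hε))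
      filter_upwards [e1, e2, e3] with n h1 h2 h3
      have k1 : ((d * c - 1 : lp D ∞) : ∀ n, D n) n = d n * c n - 1 := by
        simp [lp.infty_coeFn_mul]
        rfl
      have k2 : ((c * d - 1 : lp D ∞) : ∀ n, D n) n = c n * d n - 1 := by
        simp [lp.infty_coeFn_mul]
        rfl
      have hu1 : IsUnit (d n * c n) := by
        have hlt : ‖1 - d n * c n‖ < 1 := by
          rw [norm_sub_rev]; rw [k1] at h1; linarith
        exact sub_sub_self 1 (d n * c n) ▸ (Units.oneSub (1 - d n * c n) hlt).isUnit
      have hu2 : IsUnit (c n * d n) := by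
        have hlt : ‖1 - c n * d n‖ < 1 := by
          rw [norm_sub_rev]; rw [k2] at h2; linarith
        exact sub_sub_self 1 (c n * d n) ▸ (Units.oneSub (1 - c n * d n) hlt).isUnit
      have hud : IsUnit (d n) := aux_isUnit hu1 hu2
      refine ⟨hud, ?_⟩
      have hid : Ring.inverse (d n) - c n = Ring.inverse (d n) * (1 - d n * c n) := by
        rw [mul_sub, mul_one, ← mul_assoc, Ring.inverse_mul_cancel _ hud, one_mul]
      have hcn : ‖c n‖ ≤ ‖c‖ := lp.norm_apply_le_norm (by norm_num) c n
      have hhalf : ‖1 - d n * c n‖ ≤ 1 / 2 := by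
        rw [norm_sub_rev]; rw [k1] at h1; linarith
      have hb1 : ‖Ring.inverse (d n)‖ ≤ ‖Ring.inverse (d n)‖ * ‖1 - d n * c n‖ + ‖c n‖ := by
        have e : Ring.inverse (d n) = Ring.inverse (d n) * (1 - d n * c n) + c n := by
          rw [← hid, sub_add_cancel]
        calc ‖Ring.inverse (d n)‖ = ‖Ring.inverse (d n) * (1 - d n * c n) + c n‖ := by rw [← e]
          _ ≤ ‖Ring.inverse (d n) * (1 - d n * c n)‖ + ‖c n‖ := norm_add_le _ _
          _ ≤ ‖Ring.inverse (d n)‖ * ‖1 - d n * c n‖ + ‖c n‖ :=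
              add_le_add (norm_mul_le _ _) le_rfl
      have hb2 : ‖Ring.inverse (d n)‖ ≤ 2 * ‖c‖ := by
        nlinarith [norm_nonneg (Ring.inverse (d n)), norm_nonneg (1 - d n * c n)]
      have hdiff : ‖Ring.inverse (d n) - c n‖ ≤ 2 * ‖c‖ * ‖(d * c - 1 : lp D ∞) n‖ := by
        have : ‖1 - d n * c n‖ = ‖(d * c - 1 : lp D ∞) n‖ := by rw [k1, norm_sub_rev]
        calc ‖Ring.inverse (d n) - c n‖ = ‖Ring.inverse (d n) * (1 - d n * c n)‖ := by rw [hid]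
          _ ≤ ‖Ring.inverse (d n)‖ * ‖1 - d n * c n‖ := norm_mul_le _ _
          _ ≤ 2 * ‖c‖ * ‖(d * c - 1 : lp D ∞) n‖ := by
              rw [← this]; exact mul_le_mul_of_nonneg_right hb2 (norm_nonneg _)
      have htri : ‖Ring.inverse (d n)‖ ≤ ‖c n‖ + ‖Ring.inverse (d n) - c n‖ := by
        have := norm_add_le (c n) (Ring.inverse (d n) - c n)
        rwa [add_sub_cancel] at this
      have hnn : (0:ℝ) ≤ ‖(d * c - 1 : lp D ∞) n‖ := norm_nonneg _
      nlinarith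
    obtain ⟨M, hM⟩ := Filter.eventually_atTop.mp hev
    set f : ∀ n, D n := fun n => if n < M then 1 else Ring.inverse (d n) with hfdef
    set e : ∀ n, D n := fun n => if n < M then 1 else d n with hedef
    have hfmem : Memℓp f ⊤ := by
      apply memℓp_infty
      refine ⟨max 1 (N + ε), ?_⟩
      rintro x ⟨n, rfl⟩
      by_cases hn : n < M
      · simp only [hfdef, if_pos hn, norm_one]; exact le_max_left _ _
      · simp only [hfdef, if_neg hn]
        exact le_trans (hM n (le_of_not_gt hn)).2 (le_max_right _ _)
    have hemem : Memℓp e ⊤ := by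
      apply memℓp_infty
      refine ⟨max 1 ‖d‖, ?_⟩
      rintro x ⟨n, rfl⟩
      by_cases hn : n < M
      · simp only [hedef, if_pos hn, norm_one]; exact le_max_left _ _
      · simp only [hedef, if_neg hn]
        exact le_trans (lp.norm_apply_le_norm (by norm_num) d n) (le_max_right _ _)
    set F : lp D ∞ := ⟨f, hfmem⟩ with hFdef
    set E : lp D ∞ := ⟨e, hemem⟩ with hEdef
    have hFn : ∀ n, (F : ∀ n, D n) n = f n := fun n => rfl
    have hEn : ∀ n, (E : ∀ n, D n) n = e n := fun n => rfl
    have hEF : E * F = 1 := by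
      apply lp.ext
      rw [lp.infty_coeFn_mul, lp.infty_coeFn_one]
      funext n
      show e n * f n = 1
      by_cases hn : n < M
      · simp [hedef, hfdef, if_pos hn]
      · simp only [hedef, hfdef, if_neg hn]
        exact Ring.mul_inverse_cancel _ (hM n (le_of_not_gt hn)).1
    have hFE : F * E = 1 := by
      apply lp.ext
      rw [lp.infty_coeFn_mul, lp.infty_coeFn_one]
      funext n
      show f n * e n = 1
      by_cases hn : n < M
      · simp [hedef, hfdef, if_pos hn]
      · simp only [hedef, hfdef, if_neg hn]
        exact Ring.inverse_mul_cancel _ (hM n (le_of_not_gt hn)).1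
    have hEq : nullQuotientMk D E = a := by
      rw [← hdq]
      apply (RingCon.eq (nullRingCon D)).mpr
      show Filter.Tendsto (fun n => ‖(E - d : lp D ∞) n‖) Filter.atTop (nhds 0)
      have hz : ∀ n ≥ M, ‖(E - d : lp D ∞) n‖ = 0 := by
        intro n hn
        have h : ((E - d : lp D ∞) : ∀ n, D n) n = e n - d n := by simp; rfl
        rw [h, hedef]
        simp [if_neg (not_lt.mpr hn)]
      exact tendsto_const_nhds.congr'
        (Filter.eventually_atTop.mpr ⟨M, fun n hn => (hz n hn).symm⟩)
    have hFq : nullQuotientMk D F = Ring.inverse a := by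
      have h1 : a * nullQuotientMk D F = 1 := by
        rw [← hEq, show nullQuotientMk D E * nullQuotientMk D F = nullQuotientMk D (E * F) from
          (RingCon.coe_mul _ _ _).symm, hEF]
        rfl
      have h2 : nullQuotientMk D F * a = 1 := by
        rw [← hEq, show nullQuotientMk D F * nullQuotientMk D E = nullQuotientMk D (F * E) from
          (RingCon.coe_mul _ _ _).symm, hFE]
        rfl
      let u : (NullQuotient D)ˣ := ⟨a, nullQuotientMk D F, h1, h2⟩
      have hau : a = (u : NullQuotient D) := rfl
      rw [hau, Ring.inverse_unit]
      rfl
    have hFsa : ∀ n, IsSelfAdjoint ((F : ∀ n, D n) n) := by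
      intro n
      rw [hFn n]
      by_cases hn : n < M
      · rw [hfdef]; simp only [if_pos hn]; exact IsSelfAdjoint.one _
      · rw [hfdef]; simp only [if_neg hn]
        show star (Ring.inverse (d n)) = Ring.inverse (d n)
        rw [← Ring.inverse_star, (hdsa n).star_eq]
    rw [hQ (Ring.inverse a)]
    refine le_trans (iInf_le _ ⟨F, hFsa, hFq⟩) ?_
    refine iSup_le fun n => ?_
    by_cases hn : n < M
    · have hFone : (F : ∀ n, D n) n = 1 := by rw [hFn n, hfdef]; simp [if_pos hn]
      rw [hFone, hT1 n]
      exact bot_le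
    · have hFinv : (F : ∀ n, D n) n = Ring.inverse (d n) := by
        rw [hFn n, hfdef]; simp [if_neg hn]
      rw [hFinv]
      refine (hT n (d n) (hdsa n) (hM n (le_of_not_gt hn)).1).trans ?_
      refine mul_le_mul' (ENNReal.ofReal_le_ofReal ?_) (le_iSup (fun n => T n (d n)) n)
      have h2 := (hM n (le_of_not_gt hn)).2
      have h3 := norm_nonneg (Ring.inverse (d n))
      have h4 : ‖Ring.inverse (d n)‖ ^ 2 ≤ (N + ε) ^ 2 := by nlinarith
      have h5 : (0:ℝ) ≤ C := by linarith
      exact mul_le_mul_of_nonneg_left h4 h5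
  -- limit ε → 0
  have htendsto : Filter.Tendsto (fun ε : ℝ => ENNReal.ofReal (C * (N + ε) ^ 2) * Q a)
      (nhdsWithin 0 (Set.Ioi 0)) (nhds (ENNReal.ofReal (C * N ^ 2) * Q a)) := by
    refine ENNReal.Tendsto.mul_const ?_ (Or.inl (ENNReal.ofReal_pos.mpr (by nlinarith)).ne')
    have hcont : Filter.Tendsto (fun ε : ℝ => C * (N + ε) ^ 2) (nhdsWithin 0 (Set.Ioi 0))
        (nhds (C * N ^ 2)) := by
      have h : Continuous (fun ε : ℝ => C * (N + ε) ^ 2) := by fun_prop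
      have h2 := (h.tendsto 0).mono_left
        (nhdsWithin_le_nhds (s := Set.Ioi (0:ℝ)))
      simpa using h2
    exact (ENNReal.continuous_ofReal.tendsto _).comp hcont
  exact ge_of_tendsto htendsto
    (Filter.eventually_of_mem self_mem_nhdsWithin fun ε hε => main ε hε)

end
end

section
/- Let A be a unital C*-algebra and let B ⊆ C be unital C*-subalgebras of A. Let E_B : A → B and E_C : A → C be conditional expectations such that E_B ∘ E_C = E_B, such that E_B and E_C are *-preserving (E(a*) = E(a)* for all a), such that E_B is positive (it maps positive elements of A to positive elements), and such that E_C satisfies the Schwarz inequality E_C(a)* E_C(a) ≤ E_C(a*a) for all a ∈ A. Then for every a ∈ A: ‖E_B( (E_C(a) − E_B(a))* (E_C(a) − E_B(a)) )‖_A ≤ ‖E_B( (a − E_B(a))* (a − E_B(a)) )‖_A. -/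
/-- let `A` be a unital C*-algebra with unital C*-subalgebras `B ⊆ C`, and let
`E_B : A → B`, `E_C : A → C` be conditional expectations with `E_B ∘ E_C = E_B`, both
*-preserving, `E_B` positive, and `E_C` satisfying the Schwarz inequality
`E_C(a)* E_C(a) ≤ E_C(a* a)`.  Then for every `a ∈ A`:
`‖E_B((E_C a − E_B a)* (E_C a − E_B a))‖ ≤ ‖E_B((a − E_B a)* (a − E_B a))‖`. -/
theorem stmt5 {A : Type*} [CStarAlgebra A] [PartialOrder A] [StarOrderedRing A]
    (B C : StarSubalgebra ℂ A) (hBC : B ≤ C)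
    (EB EC : A →ₗ[ℂ] A)
    -- `E_B` is a conditional expectation onto `B`
    (hrangeB : ∀ a : A, EB a ∈ B)
    (hfixB : ∀ b ∈ B, EB b = b)
    (hcontrB : ∀ a : A, ‖EB a‖ ≤ ‖a‖)
    (hmodB : ∀ a : A, ∀ b ∈ B, ∀ b' ∈ B, EB (b * a * b') = b * EB a * b')
    -- `E_C` is a conditional expectation onto `C`
    (hrangeC : ∀ a : A, EC a ∈ C)
    (hfixC : ∀ c ∈ C, EC c = c)
    (hcontrC : ∀ a : A, ‖EC a‖ ≤ ‖a‖)
    (hmodC : ∀ a : A, ∀ c ∈ C, ∀ c' ∈ C, EC (c * a * c') = c * EC a * c')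
    -- additional hypotheses
    (hcomp : ∀ a : A, EB (EC a) = EB a)
    (hstarB : ∀ a : A, EB (star a) = star (EB a))
    (hstarC : ∀ a : A, EC (star a) = star (EC a))
    (hposB : ∀ a : A, 0 ≤ a → 0 ≤ EB a)
    (hschwarzC : ∀ a : A, star (EC a) * EC a ≤ EC (star a * a))
    (a : A) :
    ‖EB (star (EC a - EB a) * (EC a - EB a))‖ ≤ ‖EB (star (a - EB a) * (a - EB a))‖ := by
  have hbC : (EB a : A) ∈ C := hBC (hrangeB a)
  have hECd : EC (a - EB a) = EC a - EB a := by
    rw [map_sub, hfixC _ hbC]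
  have h1 : star (EC a - EB a) * (EC a - EB a) ≤ EC (star (a - EB a) * (a - EB a)) := by
    rw [← hECd]; exact hschwarzC _
  have h2 : EB (star (EC a - EB a) * (EC a - EB a)) ≤ EB (star (a - EB a) * (a - EB a)) := by
    have := hposB _ (sub_nonneg.mpr h1)
    rw [map_sub] at this
    have h3 := sub_nonneg.mp this
    rwa [hcomp] at h3
  exact CStarAlgebra.norm_le_norm_of_nonneg_of_le (hposB _ (star_mul_self_nonneg _)) h2
end

section
/- Let N, M ∈ ℕ∖{0}, let n_1,…,n_N, m_1,…,m_M ∈ ℕ∖{0}, let A = ⊕_{k=1}^N M_{n_k}(ℂ) and B = ⊕_{k=1}^M M_{m_k}(ℂ) be the direct sum C*-algebras, and let α : B → A be a unital *-monomorphism. For each n ∈ ℕ ∪ {∞}, let v^n ∈ (0,1)^N with Σ_{k=1}^N v^n_k = 1, let τ_{v^n}(a) = Σ_{k=1}^N (v^n_k / n_k) Tr(a_k) for a = (a_1,…,a_N) ∈ A, and let E^n : A → α(B) be the unique conditional expectation onto α(B) satisfying τ_{v^n} ∘ E^n = τ_{v^n}. If (v^n)_{n∈ℕ} converges coordinatewise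 to v^∞, then the Frobenius–Rieffel norms a ↦ √‖E^n(a*a)‖_A converge, as n → ∞, to a ↦ √‖E^∞(a*a)‖_A uniformly on every compact subset of (A, ‖·‖_A); in particular they converge pointwise on A. -/
open scoped Matrix.Norms.L2Operator

open Filter Matrix

/-- The direct sum C*-algebra `⊕_{k=1}^N M_{n_k}(ℂ)` (with the maximum of the operator norms). -/
abbrev MatDirectSum (N : ℕ) (n : Fin N → ℕ) : Type :=
  ∀ k : Fin N, Matrix (Fin (n k)) (Fin (n k)) ℂ

/-- The tracial functional `τ_v(a) = Σ_k (v_k / n_k) Tr(a_k)` on `⊕_k M_{n_k}(ℂ)`. -/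
noncomputable def matTrace {N : ℕ} {n : Fin N → ℕ} (v : Fin N → ℝ) (a : MatDirectSum N n) : ℂ :=
  ∑ k : Fin N, ((v k : ℂ) / (n k : ℂ)) * Matrix.trace (a k)


lemma abs_sqrt_sub_sqrt (s t : ℝ) (hs : 0 ≤ s) (ht : 0 ≤ t) :
    |Real.sqrt s - Real.sqrt t| ≤ Real.sqrt |s - t| := by
  rw [← Real.sqrt_sq_eq_abs]
  apply Real.sqrt_le_sqrt
  have h1 := Real.sq_sqrt hs
  have h2 := Real.sq_sqrt ht
  have h3 := Real.sqrt_nonneg s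
  have h4 := Real.sqrt_nonneg t
  rcases le_total t s with h | h
  · rw [abs_of_nonneg (by linarith)]
    have h5 : Real.sqrt t ≤ Real.sqrt s := Real.sqrt_le_sqrt h
    nlinarith [mul_le_mul_of_nonneg_right h5 h4]
  · rw [abs_of_nonpos (by linarith)]
    have h5 : Real.sqrt s ≤ Real.sqrt t := Real.sqrt_le_sqrt h
    nlinarith [mul_le_mul_of_nonneg_right h5 h3]

lemma trace_cont {d : ℕ} : Continuous (Matrix.trace : Matrix (Fin d) (Fin d) ℂ → ℂ) := by
  show Continuous fun M : Matrix (Fin d) (Fin d) ℂ => ∑ i, M.diag i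
  exact continuous_finset_sum _ fun i _ => (continuous_apply i).comp (continuous_apply i)

lemma matTrace_joint {N : ℕ} {n : Fin N → ℕ} (w : ℕ → Fin N → ℝ) (wl : Fin N → ℝ)
    (hw : ∀ k, Tendsto (fun q => w q k) atTop (nhds (wl k)))
    (z : ℕ → MatDirectSum N n) (zl : MatDirectSum N n) (hz : Tendsto z atTop (nhds zl)) :
    Tendsto (fun q => matTrace (w q) (z q)) atTop (nhds (matTrace wl zl)) := by
  unfold matTrace
  refine tendsto_finset_sum _ fun k _ => Tendsto.mul ?_ ?_
  · exact ((Complex.continuous_ofReal.tendsto _).comp (hw k)).div_const _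
  · exact (trace_cont.tendsto _).comp (((continuous_apply k).tendsto _).comp hz)

lemma matTrace_sub {N : ℕ} {n : Fin N → ℕ} (v : Fin N → ℝ) (a b : MatDirectSum N n) :
    matTrace v (a - b) = matTrace v a - matTrace v b := by
  unfold matTrace
  rw [← Finset.sum_sub_distrib]
  exact Finset.sum_congr rfl fun k _ => by simp [Pi.sub_apply, Matrix.trace_sub, mul_sub]

lemma matTrace_faithful {N : ℕ} {n : Fin N → ℕ} (v : Fin N → ℝ) (hv : ∀ k, 0 < v k)
    (hn : ∀ k, 0 < n k) (y : MatDirectSum N n) (h : matTrace v (star y * y) = 0) : y = 0 := by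
  have tr_eq : ∀ k, Matrix.trace ((star y * y) k)
      = ((∑ i, ∑ j, ‖y k j i‖ ^ 2 : ℝ) : ℂ) := by
    intro k
    have hk : (star y * y) k = (y k)ᴴ * (y k) := rfl
    rw [hk, Matrix.trace]
    push_cast
    refine Finset.sum_congr rfl fun i _ => ?_
    rw [Matrix.diag_apply, Matrix.mul_apply]
    refine Finset.sum_congr rfl fun j _ => ?_
    rw [Matrix.conjTranspose_apply]
    rw [show (star (y k j i) : ℂ) = (starRingEnd ℂ) (y k j i) from rfl, Complex.conj_mul']
  have key : matTrace v (star y * y)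
      = ((∑ k, (v k / (n k : ℝ)) * ∑ i, ∑ j, ‖y k j i‖ ^ 2 : ℝ) : ℂ) := by
    unfold matTrace
    push_cast
    exact Finset.sum_congr rfl fun k _ => by rw [tr_eq k]; push_cast; ring
  rw [key] at h
  have h' : (∑ k, (v k / (n k : ℝ)) * ∑ i, ∑ j, ‖y k j i‖ ^ 2 : ℝ) = 0 := by
    exact_mod_cast h
  have hterm : ∀ k ∈ Finset.univ, (0:ℝ) ≤ (v k / (n k : ℝ)) * ∑ i, ∑ j, ‖y k j i‖ ^ 2 :=
    fun k _ => mul_nonneg (div_nonneg (hv k).le (Nat.cast_nonneg _)) (by positivity)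
  rw [Finset.sum_eq_zero_iff_of_nonneg hterm] at h'
  funext k
  have hk := h' k (Finset.mem_univ k)
  have hpos : 0 < v k / (n k : ℝ) := div_pos (hv k) (by exact_mod_cast hn k)
  have hsum : (∑ i, ∑ j, ‖y k j i‖ ^ 2 : ℝ) = 0 := by
    rcases mul_eq_zero.mp hk with h1 | h1
    · exact absurd h1 hpos.ne'
    · exact h1
  have h2 := (Finset.sum_eq_zero_iff_of_nonneg
    (fun i _ => Finset.sum_nonneg fun j _ => by positivity)).mp hsum
  ext i j
  have h3 := (Finset.sum_eq_zero_iff_of_nonneg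
    (fun i' _ => by positivity : ∀ i' ∈ Finset.univ, (0:ℝ) ≤ ‖y k i' j‖ ^ 2)).mp
    (h2 j (Finset.mem_univ j)) i (Finset.mem_univ i)
  have : ‖y k i j‖ = 0 := by
    have := (pow_eq_zero_iff (n := 2) (by norm_num)).mp h3
    simpa using this
  simpa using this

/-- let `A = ⊕_{k=1}^N M_{n_k}(ℂ)`, `B = ⊕_{k=1}^M M_{m_k}(ℂ)`, and let
`α : B → A` be a unital *-monomorphism.  For each `p ∈ ℕ ∪ {∞}` let `v^p ∈ (0,1)^N` with
`Σ_k v^p_k = 1`, let `τ_{v^p}(a) = Σ_k (v^p_k/n_k) Tr(a_k)`, and let `E^p : A → α(B)` be the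
(unique) conditional expectation onto `α(B)` with `τ_{v^p} ∘ E^p = τ_{v^p}`.  If `v^p → v^∞`
coordinatewise then the Frobenius–Rieffel norms `a ↦ √‖E^p(a*a)‖` converge to
`a ↦ √‖E^∞(a*a)‖` uniformly on every compact subset of `A`, and in particular pointwise. -/
theorem stmt8 (N M : ℕ) (hN : 0 < N) (hM : 0 < M)
    (n : Fin N → ℕ) (hn : ∀ k, 0 < n k) (m : Fin M → ℕ) (hm : ∀ k, 0 < m k)
    (α : MatDirectSum M m →⋆ₐ[ℂ] MatDirectSum N n) (hα : Function.Injective α)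
    (v : ℕ → Fin N → ℝ) (vinf : Fin N → ℝ)
    (hv : ∀ p k, v p k ∈ Set.Ioo (0 : ℝ) 1) (hvinf : ∀ k, vinf k ∈ Set.Ioo (0 : ℝ) 1)
    (hvsum : ∀ p, ∑ k, v p k = 1) (hvinfsum : ∑ k, vinf k = 1)
    (E : ℕ → (MatDirectSum N n →ₗ[ℂ] MatDirectSum N n))
    (Einf : MatDirectSum N n →ₗ[ℂ] MatDirectSum N n)
    -- each `E p` is a conditional expectation onto `α(B)` preserving `τ_{v^p}`
    (hrange : ∀ p a, ∃ b, E p a = α b)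
    (hfix : ∀ p b, E p (α b) = α b)
    (hcontr : ∀ p a, ‖E p a‖ ≤ ‖a‖)
    (hmod : ∀ p a b b', E p (α b * a * α b') = α b * E p a * α b')
    (htrace : ∀ p a, matTrace (v p) (E p a) = matTrace (v p) a)
    -- `E ∞` is a conditional expectation onto `α(B)` preserving `τ_{v^∞}`
    (hrangeinf : ∀ a, ∃ b, Einf a = α b)
    (hfixinf : ∀ b, Einf (α b) = α b)
    (hcontrinf : ∀ a, ‖Einf a‖ ≤ ‖a‖)
    (hmodinf : ∀ a b b', Einf (α b * a * α b') = α b * Einf a * α b')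
    (htraceinf : ∀ a, matTrace vinf (Einf a) = matTrace vinf a)
    -- coordinatewise convergence of `v^p` to `v^∞`
    (hconv : ∀ k, Filter.Tendsto (fun p => v p k) Filter.atTop (nhds (vinf k))) :
    (∀ K : Set (MatDirectSum N n), IsCompact K →
      TendstoUniformlyOn (fun p a => Real.sqrt ‖E p (star a * a)‖)
        (fun a => Real.sqrt ‖Einf (star a * a)‖) Filter.atTop K) ∧
    (∀ a : MatDirectSum N n,
      Filter.Tendsto (fun p => Real.sqrt ‖E p (star a * a)‖) Filter.atTop
        (nhds (Real.sqrt ‖Einf (star a * a)‖))) := by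
  classical
  set A := MatDirectSum N n
  -- trace-compatibility of the conditional expectations with left multiplication
  have hstarmul : ∀ p b x, matTrace (v p) (α b * E p x) = matTrace (v p) (α b * x) := by
    intro p b x
    have h1 : E p (α b * x) = α b * E p x := by
      have := hmod p x b 1
      simpa [_root_.map_one] using this
    rw [← h1, htrace]
  have hstarmulinf : ∀ b x, matTrace vinf (α b * Einf x) = matTrace vinf (α b * x) := by
    intro b x
    have h1 : Einf (α b * x) = α b * Einf x := by
      have := hmodinf x b 1
      simpa [_root_.map_one] using this
    rw [← h1, htraceinf]
  -- uniqueness of the conditional expectation value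
  have huniq : ∀ (x L : A), (∃ c, L = α c) →
      (∀ b, matTrace vinf (α b * L) = matTrace vinf (α b * x)) → L = Einf x := by
    rintro x L ⟨c, hc⟩ hb
    obtain ⟨c', hc'⟩ := hrangeinf x
    set d := c - c' with hd
    have hαd : α d = L - Einf x := by rw [hd, map_sub, ← hc, ← hc']
    have h0 : matTrace vinf (star (α d) * α d) = 0 := by
      have e1 : star (α d) * α d = α (star d) * L - α (star d) * Einf x := by
        rw [map_star, hαd, mul_sub]
      rw [e1, matTrace_sub, hb (star d), hstarmulinf (star d) x, sub_self]
    have hz := matTrace_faithful vinf (fun k => (hvinf k).1) hn (α d) h0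
    rw [hαd] at hz
    exact sub_eq_zero.mp hz
  -- pointwise convergence of the conditional expectations
  have hpt : ∀ x : A, Tendsto (fun p => E p x) atTop (nhds (Einf x)) := by
    intro x
    apply Filter.tendsto_of_subseq_tendsto
    intro ns hns
    set y : ℕ → A := fun q => E (ns q) x with hy
    have hball : ∀ q, y q ∈ Metric.closedBall (0 : A) ‖x‖ := by
      intro q
      rw [Metric.mem_closedBall, dist_zero_right]
      exact hcontr _ _
    obtain ⟨L, _, φ, hφ, hL⟩ :=
      (isCompact_closedBall (0 : A) ‖x‖).tendsto_subseq hball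
    refine ⟨φ, ?_⟩
    have hns' : Tendsto (fun q => ns (φ q)) atTop atTop := hns.comp hφ.tendsto_atTop
    have hLmem : ∃ c, L = α c := by
      have hclosed : IsClosed (LinearMap.range α.toLinearMap : Set A) :=
        (LinearMap.range α.toLinearMap).closed_of_finiteDimensional
      have hmem : L ∈ LinearMap.range α.toLinearMap := by
        refine hclosed.mem_of_tendsto hL (Filter.Eventually.of_forall fun q => ?_)
        obtain ⟨b, hb⟩ := hrange (ns (φ q)) x
        exact ⟨b, by simp [Function.comp, hy, hb]⟩
      obtain ⟨c, hcc⟩ := hmem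
      exact ⟨c, hcc.symm⟩
    have hlim : ∀ b, matTrace vinf (α b * L) = matTrace vinf (α b * x) := by
      intro b
      have hmulc : Continuous fun t : A => α b * t :=
        (LinearMap.mulLeft ℂ (α b)).continuous_of_finiteDimensional
      have h1 : Tendsto (fun q => matTrace (v (ns (φ q))) (α b * y (φ q))) atTop
          (nhds (matTrace vinf (α b * L))) :=
        matTrace_joint _ _ (fun k => (hconv k).comp hns') _ _ ((hmulc.tendsto L).comp hL)
      have h2 : Tendsto (fun q => matTrace (v (ns (φ q))) (α b * x)) atTop
          (nhds (matTrace vinf (α b * x))) :=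
        matTrace_joint _ _ (fun k => (hconv k).comp hns') (fun _ => α b * x) _
          tendsto_const_nhds
      have heq : (fun q => matTrace (v (ns (φ q))) (α b * y (φ q)))
          = fun q => matTrace (v (ns (φ q))) (α b * x) :=
        funext fun q => hstarmul (ns (φ q)) b x
      rw [heq] at h1
      exact tendsto_nhds_unique h1 h2
    have hLE : L = Einf x := huniq x L hLmem hlim
    rw [hLE] at hL
    exact hL
  -- basis and uniform operator estimates
  set bas := Module.finBasis ℂ A with hbas
  set coordCLM := fun i => LinearMap.toContinuousLinearMap (bas.coord i) with hcoord
  set g : ℕ → ℝ := fun p => ∑ i, ‖coordCLM i‖ * ‖E p (bas i) - Einf (bas i)‖ with hg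
  have hg0 : Tendsto g atTop (nhds 0) := by
    have : Tendsto (fun p => ∑ i, ‖coordCLM i‖ * ‖E p (bas i) - Einf (bas i)‖) atTop
        (nhds (∑ i : Fin (Module.finrank ℂ A), ‖coordCLM i‖ * 0)) := by
      refine tendsto_finset_sum _ fun i _ => Tendsto.const_mul _ ?_
      exact tendsto_iff_norm_sub_tendsto_zero.mp (hpt (bas i))
    simpa using this
  have hgnonneg : ∀ p, 0 ≤ g p := fun p =>
    Finset.sum_nonneg fun i _ => by positivity
  have hDb : ∀ p (z : A), ‖E p z - Einf z‖ ≤ g p * ‖z‖ := by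
    intro p z
    have hrepr : E p z - Einf z
        = ∑ i, bas.repr z i • (E p (bas i) - Einf (bas i)) := by
      conv_lhs => rw [← Module.Basis.sum_repr bas z]
      rw [map_sum, map_sum, ← Finset.sum_sub_distrib]
      exact Finset.sum_congr rfl fun i _ => by rw [_root_.map_smul, _root_.map_smul, smul_sub]
    rw [hrepr]
    calc ‖∑ i, bas.repr z i • (E p (bas i) - Einf (bas i))‖
        ≤ ∑ i, ‖bas.repr z i • (E p (bas i) - Einf (bas i))‖ := norm_sum_le _ _
      _ ≤ ∑ i, (‖coordCLM i‖ * ‖z‖) * ‖E p (bas i) - Einf (bas i)‖ := by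
          refine Finset.sum_le_sum fun i _ => ?_
          rw [norm_smul]
          refine mul_le_mul_of_nonneg_right ?_ (norm_nonneg _)
          have hco : bas.repr z i = coordCLM i z := rfl
          rw [hco]
          exact (coordCLM i).le_opNorm z
      _ = g p * ‖z‖ := by
          rw [hg, Finset.sum_mul]
          exact Finset.sum_congr rfl fun i _ => by ring
  -- main uniform convergence statement
  have main : ∀ K : Set A, IsCompact K →
      TendstoUniformlyOn (fun p a => Real.sqrt ‖E p (star a * a)‖)
        (fun a => Real.sqrt ‖Einf (star a * a)‖) atTop K := by
    intro K hK
    have hcontsa : Continuous fun a : A => star a * a :=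
      continuous_star.mul continuous_id
    obtain ⟨C₀, hC₀⟩ := hK.exists_bound_of_continuousOn hcontsa.continuousOn
    set C := max C₀ 0 with hC
    have hCnn : 0 ≤ C := le_max_right _ _
    have hCb : ∀ a ∈ K, ‖star a * a‖ ≤ C := fun a ha => (hC₀ a ha).trans (le_max_left _ _)
    rw [Metric.tendstoUniformlyOn_iff]
    intro ε hε
    have hev : ∀ᶠ p in atTop, g p < ε ^ 2 / (C + 1) :=
      hg0.eventually_lt_const (show (0:ℝ) < ε ^ 2 / (C + 1) by positivity)
    filter_upwards [hev] with p hp a ha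
    rw [Real.dist_eq]
    set c := star a * a with hc
    have h1 : |Real.sqrt ‖Einf c‖ - Real.sqrt ‖E p c‖| ≤ Real.sqrt |‖Einf c‖ - ‖E p c‖| :=
      abs_sqrt_sub_sqrt _ _ (norm_nonneg _) (norm_nonneg _)
    have h2 : |‖Einf c‖ - ‖E p c‖| ≤ ‖Einf c - E p c‖ := abs_norm_sub_norm_le _ _
    have h3 : ‖Einf c - E p c‖ ≤ g p * ‖c‖ := by
      rw [norm_sub_rev]
      exact hDb p c
    have h4 : g p * ‖c‖ ≤ g p * C := mul_le_mul_of_nonneg_left (hCb a ha) (hgnonneg p)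
    have h5 : g p * C < ε ^ 2 := by
      have h6 : g p * (C + 1) < ε ^ 2 := by
        have := (lt_div_iff₀ (show (0:ℝ) < C + 1 by linarith)).mp hp
        linarith
      have h7 : g p * C ≤ g p * (C + 1) :=
        mul_le_mul_of_nonneg_left (by linarith) (hgnonneg p)
      linarith
    exact lt_of_le_of_lt (h1.trans (Real.sqrt_le_sqrt (h2.trans (h3.trans h4))))
      ((Real.sqrt_lt' hε).mpr h5)
  refine ⟨main, fun a => ?_⟩
  exact (main {a} isCompact_singleton).tendsto_at (Set.mem_singleton a)
end
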